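/- Let M be a symmetric invertible n×n real matrix, V : ℝ^n → ℝ a C¹ potential, h > 0, and define the map 𝓛_d : (ℝ^n × ℝ^n) × (ℝ^n × ℝ^n) → ℝ by 𝓛_d(x, p, x', p') = (1/4)‖p − M(x'−x)/h − (h/2)∇V(x)‖² + (1/4)‖p' − M(x'−x)/h + (h/2)∇V(x')‖². Then for any points x_{k-1}, x_k, x_{k+1} ∈ ℝ^n and momenta p_{k-1}, p_k, p_{k+1} ∈ ℝ^n, the discrete Euler–Lagrange equation in the momentum slot, D_4 𝓛_d(x_{k-1}, p_{k-1}, x_k, p_k) + D_2 𝓛_d(x_k, p_k, x_{k+1}, p_{k+1}) = 0, is equivalent to p_k = M (x_{k+1} − x_{k-1}) / (2h). -/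

import Mathlib

/-- The optimal-control Lagrangian `𝓛_d` on `T*ℝⁿ × T*ℝⁿ` associated with the trapezoidal
discretization of the mechanical Lagrangian `L(x,ẋ) = ½ẋᵀMẋ − V(x)` and the
squared-control-effort cost:
`𝓛_d(x,p,x',p') = ¼‖p − M(x'−x)/h − (h/2)∇V(x)‖² + ¼‖p' − M(x'−x)/h + (h/2)∇V(x')‖²`. -/
noncomputable def cLd {n : ℕ} (M : Matrix (Fin n) (Fin n) ℝ)
    (V : EuclideanSpace ℝ (Fin n) → ℝ) (h : ℝ)
    (x p x' p' : EuclideanSpace ℝ (Fin n)) : ℝ :=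
  (1 / 4) * ‖p - h⁻¹ • Matrix.toEuclideanLin M (x' - x) - (h / 2) • gradient V x‖ ^ 2
    + (1 / 4) * ‖p' - h⁻¹ • Matrix.toEuclideanLin M (x' - x) + (h / 2) • gradient V x'‖ ^ 2

lemma aux_fd {n : ℕ} (a : EuclideanSpace ℝ (Fin n)) (C : ℝ) (x : EuclideanSpace ℝ (Fin n)) :
    HasFDerivAt (fun w => (1 / 4) * ‖w - a‖ ^ 2 + C)
      ((1/2 : ℝ) • (innerSL ℝ (x - a))) x := by
  have h1 : HasFDerivAt (fun w : EuclideanSpace ℝ (Fin n) => ‖w - a‖ ^ 2)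
      (2 • ((innerSL ℝ (x - a)).comp (ContinuousLinearMap.id ℝ _))) x := by
    simpa using ((hasFDerivAt_id x).sub_const a).norm_sq
  have h2 := (h1.const_mul (1/4 : ℝ)).add_const C
  refine h2.congr_fderiv ?_
  ext v
  simp [smul_smul]
  ring


/-- For the optimal-control Lagrangian `𝓛_d` built from a symmetric invertible mass matrix
`M`, a C¹ potential `V` and a time step `h > 0`, the discrete Euler–Lagrange equation in
the momentum slot, `D₄𝓛_d(x_{k-1},p_{k-1},x_k,p_k) + D₂𝓛_d(x_k,p_k,x_{k+1},p_{k+1}) = 0`,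
is equivalent to `p_k = M(x_{k+1} − x_{k-1})/(2h)`. -/
theorem stmt_7 {n : ℕ} (M : Matrix (Fin n) (Fin n) ℝ)
    (hM : M.IsSymm) (hMinv : IsUnit M)
    (V : EuclideanSpace ℝ (Fin n) → ℝ) (hV : ContDiff ℝ 1 V)
    (h : ℝ) (hh : 0 < h)
    (xkm xk xkp pkm pk pkp : EuclideanSpace ℝ (Fin n)) :
    (fderiv ℝ (fun w => cLd M V h xkm pkm xk w) pk
        + fderiv ℝ (fun w => cLd M V h xk w xkp pkp) pk = 0)
    ↔ pk = (2 * h)⁻¹ • Matrix.toEuclideanLin M (xkp - xkm) := by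
  have hf1 : (fun w => cLd M V h xkm pkm xk w)
      = fun w => (1/4) * ‖w - (h⁻¹ • Matrix.toEuclideanLin M (xk - xkm)
            - (h/2) • gradient V xk)‖ ^ 2
          + ((1/4) * ‖pkm - h⁻¹ • Matrix.toEuclideanLin M (xk - xkm)
            - (h/2) • gradient V xkm‖ ^ 2) := by
    funext w
    have e : w - h⁻¹ • Matrix.toEuclideanLin M (xk - xkm) + (h/2) • gradient V xk
        = w - (h⁻¹ • Matrix.toEuclideanLin M (xk - xkm) - (h/2) • gradient V xk) := by abel
    simp only [cLd, e]
    ring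
  have hf2 : (fun w => cLd M V h xk w xkp pkp)
      = fun w => (1/4) * ‖w - (h⁻¹ • Matrix.toEuclideanLin M (xkp - xk)
            + (h/2) • gradient V xk)‖ ^ 2
          + ((1/4) * ‖pkp - h⁻¹ • Matrix.toEuclideanLin M (xkp - xk)
            + (h/2) • gradient V xkp‖ ^ 2) := by
    funext w
    have e : w - h⁻¹ • Matrix.toEuclideanLin M (xkp - xk) - (h/2) • gradient V xk
        = w - (h⁻¹ • Matrix.toEuclideanLin M (xkp - xk) + (h/2) • gradient V xk) := by abel
    simp only [cLd, e]
  rw [hf1, hf2, (aux_fd _ _ pk).fderiv, (aux_fd _ _ pk).fderiv]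
  rw [← smul_add, ← map_add]
  have key : ∀ u : EuclideanSpace ℝ (Fin n),
      ((1/2 : ℝ) • innerSL ℝ u = 0) ↔ u = 0 := by
    intro u
    constructor
    · intro hz
      have := congrArg (fun T : EuclideanSpace ℝ (Fin n) →L[ℝ] ℝ => T u) hz
      simp only [ContinuousLinearMap.smul_apply, innerSL_apply_apply,
        ContinuousLinearMap.zero_apply, smul_eq_mul] at this
      have h0 : (inner ℝ u u : ℝ) = 0 := by linarith [this]
      exact inner_self_eq_zero.mp h0
    · intro hz; simp [hz]
  rw [key]
  have hBB : h⁻¹ • Matrix.toEuclideanLin M (xk - xkm)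
      + h⁻¹ • Matrix.toEuclideanLin M (xkp - xk)
      = h⁻¹ • Matrix.toEuclideanLin M (xkp - xkm) := by
    rw [← smul_add, ← map_add]
    congr 2
    abel
  have hsum : pk - (h⁻¹ • Matrix.toEuclideanLin M (xk - xkm) - (h/2) • gradient V xk)
      + (pk - (h⁻¹ • Matrix.toEuclideanLin M (xkp - xk) + (h/2) • gradient V xk))
      = (2:ℝ) • pk - h⁻¹ • Matrix.toEuclideanLin M (xkp - xkm) := by
    rw [← hBB]; module
  rw [hsum, sub_eq_zero]
  rw [show ((2*h)⁻¹ : ℝ) = 2⁻¹ * h⁻¹ by rw [mul_inv], ← smul_smul]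
  constructor
  · intro e; rw [← e, smul_smul]; norm_num
  · intro e; rw [e, smul_smul]; norm_num
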